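/- arXiv:math/0511033 — 2 statements merged into one kernel-verified Lean document; each statement's English description precedes it below -/
import Mathlib

section
/- For matroids M(S) and N(T) on disjoint finite sets S and T, the set of matroids L on S ∪ T satisfying L|S = M and L/S = N is exactly the interval [M ⊕ N, M □ N] in the rank-preserving weak order on matroids on S ∪ T. -/
open Matroid

variable {α : Type*}

/-- The contraction `M / C` of a matroid by a set, defined as the dual of the
deletion (restriction to the complement) of the dual. Its ground set is `M.E \ C`. -/
def Matroid.con (M : Matroid α) (C : Set α) : Matroid α := (M✶ ↾ (M.E \ C))✶

/-- The rank `ρ(M)` of a matroid (as a value in `ℕ∞`): the common cardinality of its bases. -/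
noncomputable def Matroid.erank (M : Matroid α) : ℕ∞ := ⨆ B ∈ {B | M.IsBase B}, B.encard

/-- The rank function `ρ_M(X)` of a matroid: the rank of the restriction to `X`. -/
noncomputable def Matroid.rnk (M : Matroid α) (X : Set α) : ℕ∞ := (M ↾ X).erank

/-- `IsFreeProduct M N P` says that `P` is the free product `M □ N`: its ground set is
`M.E ∪ N.E`, and its bases are exactly the sets `B ⊆ M.E ∪ N.E` of cardinality
`ρ(M) + ρ(N)` such that `B ∩ M.E` is independent in `M` and `B ∩ N.E` spans `N`. -/
def IsFreeProduct (M N P : Matroid α) : Prop :=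
  P.E = M.E ∪ N.E ∧ ∀ B : Set α,
    (P.IsBase B ↔ B ⊆ M.E ∪ N.E ∧ B.encard = M.erank + N.erank ∧
      M.Indep (B ∩ M.E) ∧ N.Spanning (B ∩ N.E))

/-- The rank-preserving weak order on matroids: `M ≤ N` iff `M` and `N` have the same
ground set and every base of `M` is a base of `N`. -/
def weakLE (M N : Matroid α) : Prop := M.E = N.E ∧ ∀ B, M.IsBase B → N.IsBase B

/-- The rank of a matroid equals the cardinality of any of its bases. -/
lemma Matroid.IsBase.erank_eq {M : Matroid α} {B : Set α} (hB : M.IsBase B) :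
    M.erank = B.encard := by
  unfold Matroid.erank
  apply le_antisymm
  · exact iSup₂_le fun B' hB' => (hB'.encard_eq_encard_of_isBase hB).le
  · exact le_iSup₂ (f := fun (B : Set α) (_ : B ∈ {B | M.IsBase B}) => B.encard) B hB

/-- Bases of the contraction `L.con C` in terms of the dual. -/
lemma con_base_iff {L : Matroid α} {C B : Set α} :
    (L.con C).IsBase B ↔ B ⊆ L.E \ C ∧ L✶.IsBasis ((L.E \ C) \ B) (L.E \ C) := by
  rw [Matroid.con, dual_isBase_iff', restrict_ground_eq,
    isBase_restrict_iff (show L.E \ C ⊆ L✶.E from by rw [dual_ground]; exact Set.diff_subset),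
    and_comm]

/-- Exchange: given a basis `I` of `C` and a base `W`, there is a base between
`I` and `I ∪ (W \ C)`. -/
lemma exists_base_subset_union_diff {L : Matroid α} {C I W : Set α}
    (hI : L.IsBasis I C) (hW : L.IsBase W) :
    ∃ W', L.IsBase W' ∧ I ⊆ W' ∧ W' ⊆ I ∪ (W \ C) := by
  obtain ⟨W', hW', hIW', hsub⟩ := hI.indep.exists_isBase_subset_union_isBase hW
  refine ⟨W', hW', hIW', fun x hx => ?_⟩
  by_cases hxC : x ∈ C
  · have hIC : I = W' ∩ C := hI.eq_of_subset_indep (hW'.indep.subset Set.inter_subset_left)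
      (Set.subset_inter hIW' hI.subset) Set.inter_subset_right
    exact Or.inl (hIC ▸ ⟨hx, hxC⟩)
  · rcases hsub hx with hxI | hxW
    · exact absurd (hI.subset hxI) hxC
    · exact Or.inr ⟨hxW, hxC⟩

/-- If `I` is a basis of `C` and `B` is a base of `L.con C`, then `I ∪ B` is a base of `L`. -/
lemma Matroid.IsBasis.base_union_of_con_base {L : Matroid α} {C I B : Set α}
    (hI : L.IsBasis I C) (hB : (L.con C).IsBase B) : L.IsBase (I ∪ B) := by
  rw [con_base_iff] at hB
  obtain ⟨hBD, hX⟩ := hB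
  -- `X := (L.E \ C) \ B` is coindependent, so some base avoids it
  obtain ⟨_, ⟨W, hW, hXW⟩⟩ := (dual_indep_iff_exists').1 hX.indep
  obtain ⟨W', hW', hIW', hsub⟩ := exists_base_subset_union_diff hI hW
  have hW'IB : W' ⊆ I ∪ B := by
    refine hsub.trans (Set.union_subset_union_right I fun y hy => ?_)
    by_contra hyB
    exact hXW.ne_of_mem ⟨⟨hW.subset_ground hy.1, hy.2⟩, hyB⟩ hy.1 rfl
  have hBW' : B ⊆ W' := by
    intro x hx
    by_contra hxW'
    have hxind : L✶.Indep (insert x ((L.E \ C) \ B)) := by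
      refine (hW'.compl_isBase_dual.indep).subset ?_
      rw [Set.insert_subset_iff]
      refine ⟨⟨(hBD hx).1, hxW'⟩, fun y hy => ⟨hy.1.1, fun hyW' => ?_⟩⟩
      rcases hW'IB hyW' with hyI | hyB
      · exact hy.1.2 (hI.subset hyI)
      · exact hy.2 hyB
    have heq := hX.eq_of_subset_indep hxind (Set.subset_insert _ _)
      (Set.insert_subset (hBD hx) Set.diff_subset)
    have hxmem : x ∈ (L.E \ C) \ B := heq ▸ Set.mem_insert x _
    exact hxmem.2 hx
  have : W' = I ∪ B := hW'IB.antisymm (Set.union_subset hIW' hBW')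
  exact this ▸ hW'

/-- Conversely, if `I` is a basis of `C`, `B ⊆ L.E \ C`, and `I ∪ B` is a base of `L`,
then `B` is a base of `L.con C`. -/
lemma Matroid.IsBasis.con_base_of_base_union {L : Matroid α} {C I B : Set α}
    (hI : L.IsBasis I C) (hBD : B ⊆ L.E \ C) (hB : L.IsBase (I ∪ B)) : (L.con C).IsBase B := by
  rw [con_base_iff]
  refine ⟨hBD, ?_⟩
  have hXind : L✶.Indep ((L.E \ C) \ B) := by
    rw [dual_indep_iff_exists']
    refine ⟨Set.diff_subset.trans Set.diff_subset, I ∪ B, hB, ?_⟩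
    rw [Set.disjoint_union_right]
    exact ⟨Set.disjoint_sdiff_left.mono Set.diff_subset hI.subset, Set.disjoint_sdiff_left⟩
  rw [isBasis_iff (show L.E \ C ⊆ L✶.E from by rw [dual_ground]; exact Set.diff_subset)]
  refine ⟨hXind, Set.diff_subset, fun J hJ hXJ hJD => ?_⟩
  by_contra hne
  obtain ⟨x, hxJ, hxX⟩ := Set.exists_of_ssubset (hXJ.ssubset_of_ne hne)
  have hxB : x ∈ B := by
    by_contra hxB
    exact hxX ⟨hJD hxJ, hxB⟩
  obtain ⟨_, ⟨W, hW, hJW⟩⟩ := (dual_indep_iff_exists').1 hJ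
  obtain ⟨W', hW', hIW', hsub⟩ := exists_base_subset_union_diff hI hW
  have hW'sub : W' ⊆ I ∪ B := by
    refine hsub.trans (Set.union_subset_union_right I fun y hy => ?_)
    by_contra hyB
    exact (hJW.ne_of_mem (hXJ ⟨⟨hW.subset_ground hy.1, hy.2⟩, hyB⟩) hy.1) rfl
  have hW'eq : W' = I ∪ B := hW'.eq_of_subset_isBase hB hW'sub
  have hxW : x ∉ W := fun hxW => hJW.ne_of_mem hxJ hxW rfl
  have hxW' : x ∈ W' := hW'eq ▸ Or.inr hxB
  rcases hsub hxW' with hxI | hxW2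
  · exact (hBD hxB).2 (hI.subset hxI)
  · exact hxW hxW2.1

/-- for matroids `M(S)`, `N(T)` on disjoint finite sets, the matroids `L` on
`S ∪ T` with `L|S = M` and `L/S = N` are exactly those in the weak-order interval
`[M ⊕ N, M □ N]`. -/
theorem minor_pair_eq_interval
    (M N : Matroid α) (hM : M.E.Finite) (hN : N.E.Finite) (h : Disjoint M.E N.E)
    (F : Matroid α) (hF : IsFreeProduct M N F)
    (L : Matroid α) (hLE : L.E = M.E ∪ N.E) :
    (L ↾ M.E = M ∧ L.con M.E = N) ↔ (weakLE (M.disjointSum N h) L ∧ weakLE L F) := by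
  have hSE : M.E ⊆ L.E := hLE ▸ Set.subset_union_left
  have hTE : N.E ⊆ L.E := hLE ▸ Set.subset_union_right
  have hD : L.E \ M.E = N.E := by
    rw [hLE, Set.union_diff_left, sdiff_eq_left.2 h.symm]
  constructor
  · rintro ⟨hres, hcon⟩
    -- bases of M are L-bases of M.E, bases of N are bases of L.con M.E
    have hbasisM : ∀ {B_M : Set α}, M.IsBase B_M → L.IsBasis B_M M.E := by
      intro B_M hBM
      rw [← hres] at hBM
      exact (isBase_restrict_iff hSE).1 hBM
    have hbaseL : ∀ {B_M B_N : Set α}, M.IsBase B_M → N.IsBase B_N → L.IsBase (B_M ∪ B_N) := by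
      intro B_M B_N hBM hBN
      rw [← hcon] at hBN
      exact (hbasisM hBM).base_union_of_con_base hBN
    constructor
    · refine ⟨by rw [disjointSum_ground_eq, hLE], fun B hB => ?_⟩
      rw [disjointSum_isBase_iff] at hB
      obtain ⟨hBM, hBN, hBsub⟩ := hB
      have := hbaseL hBM hBN
      rwa [← Set.inter_union_distrib_left, Set.inter_eq_self_of_subset_left hBsub] at this
    · refine ⟨hLE.trans hF.1.symm, fun B hB => ?_⟩
      rw [hF.2 B]
      obtain ⟨B_M, hBM⟩ := M.exists_isBase
      obtain ⟨B_N, hBN⟩ := N.exists_isBase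
      have hLbase := hbaseL hBM hBN
      refine ⟨hLE ▸ hB.subset_ground, ?_, ?_, ?_⟩
      · rw [hBM.erank_eq, hBN.erank_eq, ← Set.encard_union_eq
          (h.mono hBM.subset_ground hBN.subset_ground)]
        exact hB.encard_eq_encard_of_isBase hLbase
      · have : (L ↾ M.E).Indep (B ∩ M.E) :=
          restrict_indep_iff.2 ⟨hB.indep.subset Set.inter_subset_left, Set.inter_subset_right⟩
        rwa [hres] at this
      · obtain ⟨I, hIbasis, hBI⟩ := (hB.indep.subset
          (show B ∩ M.E ⊆ B from Set.inter_subset_left)).subset_isBasis_of_subset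
          Set.inter_subset_right hSE
        obtain ⟨W', hW', hIW', hsub⟩ := exists_base_subset_union_diff hIbasis hB
        have hB'D : W' \ I ⊆ L.E \ M.E := fun y hy => by
          rcases hsub hy.1 with hyI | hyBM
          · exact absurd hyI hy.2
          · exact ⟨hW'.subset_ground hy.1, hyBM.2⟩
        have hconbase : (L.con M.E).IsBase (W' \ I) := by
          refine hIbasis.con_base_of_base_union hB'D ?_
          rwa [Set.union_diff_cancel hIW']
        rw [hcon] at hconbase
        refine (spanning_iff_exists_isBase_subset Set.inter_subset_right).2
          ⟨W' \ I, hconbase, fun y hy => ?_⟩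
        rcases hsub hy.1 with hyI | hyBM
        · exact absurd hyI hy.2
        · exact ⟨hyBM.1, hD ▸ (⟨hW'.subset_ground hy.1, hyBM.2⟩ : y ∈ L.E \ M.E)⟩
  · rintro ⟨⟨hg1, hw1⟩, ⟨hg2, hw2⟩⟩
    have hsum : ∀ {B_M B_N : Set α}, M.IsBase B_M → N.IsBase B_N → L.IsBase (B_M ∪ B_N) := by
      intro B_M B_N hm hn
      refine hw1 _ (disjointSum_isBase_iff.2 ⟨?_, ?_, Set.union_subset_union
        hm.subset_ground hn.subset_ground⟩)
      · rwa [Set.union_inter_distrib_right, Set.inter_eq_self_of_subset_left hm.subset_ground,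
          (h.symm.mono_left hn.subset_ground).inter_eq, Set.union_empty]
      · rwa [Set.union_inter_distrib_right, Set.inter_eq_self_of_subset_left hn.subset_ground,
          (h.mono_left hm.subset_ground).inter_eq, Set.empty_union]
    constructor
    · refine ext_indep (by rw [restrict_ground_eq]) (fun I hI => ?_)
      rw [restrict_ground_eq] at hI
      rw [restrict_indep_iff, and_iff_left hI]
      constructor
      · intro hLI
        obtain ⟨B, hB, hIB⟩ := hLI.exists_isBase_superset
        have := ((hF.2 B).1 (hw2 B hB)).2.2.1
        exact this.subset (Set.subset_inter hIB hI)
      · intro hMI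
        obtain ⟨B_M, hBM, hIBM⟩ := hMI.exists_isBase_superset
        obtain ⟨B_N, hBN⟩ := N.exists_isBase
        exact (hsum hBM hBN).indep.subset (hIBM.trans Set.subset_union_left)
    · have hkey : L✶ ↾ N.E = N✶ := by
        refine ext_indep (by rw [restrict_ground_eq, dual_ground])
          (fun I hI => ?_)
        rw [restrict_ground_eq] at hI
        rw [restrict_indep_iff, and_iff_left hI, dual_indep_iff_exists',
          dual_indep_iff_exists', and_iff_right (hI.trans hTE), and_iff_right hI]
        constructor
        · rintro ⟨W, hW, hIW⟩
          obtain ⟨B_N, hBN, hBNsub⟩ := ((hF.2 W).1 (hw2 W hW)).2.2.2.exists_isBase_subset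
          exact ⟨B_N, hBN, hIW.mono_right (hBNsub.trans Set.inter_subset_left)⟩
        · rintro ⟨B_N, hBN, hIBN⟩
          obtain ⟨B_M, hBM⟩ := M.exists_isBase
          refine ⟨B_M ∪ B_N, hsum hBM hBN, ?_⟩
          rw [Set.disjoint_union_right]
          exact ⟨(h.symm.mono hI hBM.subset_ground), hIBN⟩
      rw [show L.con M.E = (L✶ ↾ (L.E \ M.E))✶ from rfl, hD, hkey, dual_dual]
end

section
/- For any matroid M on a finite set S and any U ⊆ S, the map φ_U on the rank-preserving weak order of matroids on S, defined by φ_U(M) = M|U □ M/U, is a closure operator: it is idempotent, order-preserving, and satisfies M ≤ φ_U(M). Moreover, M is φ_U-closed if and only if U is a free separator of M, i.e., M = M|U □ M/U. -/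
open Matroid

variable {α : Type*}

open Set

section Aux

variable {M F : Matroid α} {S U X B I J K : Set α}

lemma erank_eq_encard (hB : M.IsBase B) : M.erank = B.encard := by
  rw [Matroid.erank]
  refine le_antisymm (iSup₂_le fun B' hB' => ?_)
    (le_iSup₂ (f := fun (B' : Set α) (_ : B' ∈ {B | M.IsBase B}) => B'.encard) B hB)
  exact (IsBase.encard_eq_encard_of_isBase hB' hB).le

lemma con_ground (M : Matroid α) (U : Set α) : (M.con U).E = M.E \ U := rfl

lemma con_dual (M : Matroid α) (U : Set α) : (M.con U)✶ = M✶ ↾ (M.E \ U) := dual_dual _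

lemma con_spanning_iff (hU : U ⊆ M.E) (hX : X ⊆ M.E \ U) :
    (M.con U).Spanning X ↔ M.Spanning (X ∪ U) := by
  have hXE : X ⊆ M.E := hX.trans diff_subset
  constructor
  · intro h
    have h2 : (M.con U)✶.Indep ((M.con U).E \ X) :=
      coindep_def.1 ((spanning_iff_compl_coindep hX).1 h)
    rw [con_dual, con_ground, restrict_indep_iff, dual_indep_iff_exists'] at h2
    obtain ⟨⟨-, B, hB, hdis⟩, -⟩ := h2
    refine (spanning_iff_exists_isBase_subset (union_subset hXE hU)).2 ⟨B, hB, fun e heB => ?_⟩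
    by_contra hne
    exact (disjoint_left.1 hdis)
      ⟨⟨hB.subset_ground heB, fun h' => hne (Or.inr h')⟩, fun h' => hne (Or.inl h')⟩ heB
  · intro h
    obtain ⟨B, hB, hBXU⟩ := h.exists_isBase_subset
    have h2 : (M.con U)✶.Indep ((M.con U).E \ X) := by
      rw [con_dual, con_ground, restrict_indep_iff, dual_indep_iff_exists']
      refine ⟨⟨diff_subset.trans diff_subset, B, hB, disjoint_left.2 fun e he heB => ?_⟩,
        diff_subset⟩
      rcases hBXU heB with hx | hu
      · exact he.2 hx
      · exact he.1.2 hu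
    exact (spanning_iff_compl_coindep hX).2 (coindep_def.2 h2)

lemma con_base_of (hU : U ⊆ M.E) (hJ : M.IsBasis J U) (hK : K ⊆ M.E \ U)
    (hB : M.IsBase (K ∪ J)) : (M.con U).IsBase K := by
  have hJU := hJ.subset
  have hKU : K ∩ U = ∅ := eq_empty_iff_forall_notMem.2 fun e he => (hK he.1).2 he.2
  have hBU : (K ∪ J) ∩ U = J := by
    rw [union_inter_distrib_right, inter_eq_self_of_subset_left hJU, hKU, empty_union]
  have hdb : M✶.IsBasis ((M.E \ (K ∪ J)) ∩ (M.E \ U)) (M.E \ U) :=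
    (hB.inter_isBasis_iff_compl_inter_isBasis_dual hU).1 (by rwa [hBU])
  have hset : (M.E \ (K ∪ J)) ∩ (M.E \ U) = (M.E \ U) \ K := by
    ext e
    simp only [mem_inter_iff, mem_diff, mem_union]
    constructor
    · rintro ⟨⟨he, hn⟩, _, hu⟩
      exact ⟨⟨he, hu⟩, fun hk => hn (Or.inl hk)⟩
    · rintro ⟨⟨he, hu⟩, hk⟩
      exact ⟨⟨he, fun h => h.elim hk (fun hj => hu (hJU hj))⟩, he, hu⟩
  rw [hset] at hdb
  have hres : (M✶ ↾ (M.E \ U)).IsBase ((M.E \ U) \ K) := hdb.isBase_restrict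
  exact (dual_isBase_iff (show K ⊆ (M✶ ↾ (M.E \ U)).E from hK)).2 hres

lemma exists_of_con_base (hU : U ⊆ M.E) (hK : (M.con U).IsBase K) :
    K ⊆ M.E \ U ∧ ∃ J, M.IsBasis J U ∧ M.IsBase (K ∪ J) := by
  have hKg : K ⊆ M.E \ U := hK.subset_ground
  have h1 : (M✶ ↾ (M.E \ U)).IsBase ((M.E \ U) \ K) :=
    (dual_isBase_iff (show K ⊆ (M✶ ↾ (M.E \ U)).E from hKg)).1 hK
  have h2 : M✶.IsBasis ((M.E \ U) \ K) (M.E \ U) :=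
    (isBase_restrict_iff (show M.E \ U ⊆ M✶.E from diff_subset)).1 h1
  obtain ⟨D, hD, hsub⟩ := h2.indep.exists_isBase_superset
  have heq : (M.E \ U) \ K = D ∩ (M.E \ U) :=
    h2.eq_of_subset_indep (hD.indep.inter_right _) (subset_inter hsub diff_subset)
      inter_subset_right
  have hDint : M✶.IsBasis (D ∩ (M.E \ U)) (M.E \ U) := by rwa [heq] at h2
  have h3 := (hD.inter_isBasis_iff_compl_inter_isBasis_dual
    (show M.E \ U ⊆ M✶.E from diff_subset)).1 hDint
  rw [dual_dual] at h3
  simp only [dual_ground, diff_diff_cancel_left hU] at h3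
  refine ⟨hKg, (M.E \ D) ∩ U, h3, ?_⟩
  have hBase : M.IsBase (M.E \ D) := hD.compl_isBase_of_dual
  have hKD : K ∪ (M.E \ D) ∩ U = M.E \ D := by
    ext e
    simp only [mem_union, mem_inter_iff, mem_diff]
    constructor
    · rintro (hk | ⟨h, _⟩)
      · refine ⟨(hKg hk).1, fun hD' => ?_⟩
        have : e ∈ D ∩ (M.E \ U) := ⟨hD', hKg hk⟩
        rw [← heq] at this
        exact this.2 hk
      · exact h
    · rintro ⟨he, hnD⟩
      by_cases hu : e ∈ U
      · exact Or.inr ⟨⟨he, hnD⟩, hu⟩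
      · left
        by_contra hk
        have : e ∈ (M.E \ U) \ K := ⟨⟨he, hu⟩, hk⟩
        rw [heq] at this
        exact hnD this.1
  rw [hKD]
  exact hBase

lemma rank_sum (hU : U ⊆ M.E) : (M ↾ U).erank + (M.con U).erank = M.erank := by
  obtain ⟨K, hK⟩ := (M.con U).exists_isBase
  obtain ⟨hKg, J, hJ, hB⟩ := exists_of_con_base hU hK
  have hdisj : Disjoint K J := disjoint_left.2 fun e hk hj => (hKg hk).2 (hJ.subset hj)
  rw [erank_eq_encard hJ.isBase_restrict, erank_eq_encard hK, erank_eq_encard hB,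
    encard_union_eq hdisj, add_comm]

lemma spanning_base_of {N : Matroid α} (hE : N.E.Finite) (hsp : N.Spanning K)
    (hcard : K.encard = N.erank) : N.IsBase K := by
  obtain ⟨B, hB, hBK⟩ := hsp.exists_isBase_subset
  have hfin : K.Finite := hE.subset hsp.subset_ground
  have heq : B = K :=
    hfin.eq_of_subset_of_encard_le' hBK (hcard.trans (erank_eq_encard hB)).le
  exact heq ▸ hB

lemma isFP_ground (hU : U ⊆ S) (hME : M.E = S)
    (hF : IsFreeProduct (M ↾ U) (M.con U) F) : F.E = S := by
  rw [hF.1, restrict_ground_eq, con_ground, hME, union_diff_cancel hU]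

lemma isFP_base_iff (hU : U ⊆ S) (hME : M.E = S)
    (hF : IsFreeProduct (M ↾ U) (M.con U) F) (B : Set α) :
    F.IsBase B ↔ B ⊆ S ∧ B.encard = (M ↾ U).erank + (M.con U).erank ∧
      M.Indep (B ∩ U) ∧ (M.con U).Spanning (B ∩ (S \ U)) := by
  have hcg : (M.con U).E = S \ U := by rw [con_ground, hME]
  rw [hF.2 B, restrict_ground_eq, hcg, union_diff_cancel hU, restrict_indep_iff,
    and_iff_left (inter_subset_right)]

lemma base_to_F (hU : U ⊆ S) (hME : M.E = S)
    (hF : IsFreeProduct (M ↾ U) (M.con U) F) (hB : M.IsBase B) : F.IsBase B := by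
  have hUE : U ⊆ M.E := hME ▸ hU
  have hBS : B ⊆ S := hME ▸ hB.subset_ground
  rw [isFP_base_iff hU hME hF]
  refine ⟨hBS, ?_, hB.indep.inter_right U, ?_⟩
  · rw [rank_sum hUE, erank_eq_encard hB]
  · rw [con_spanning_iff hUE (show B ∩ (S \ U) ⊆ M.E \ U by rw [hME]; exact inter_subset_right)]
    refine hB.spanning.superset (fun e heB => ?_)
      (show B ∩ (S \ U) ∪ U ⊆ M.E by
        rw [hME]; exact union_subset (inter_subset_left.trans hBS) hU)
    by_cases hu : e ∈ U
    · exact Or.inr hu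
    · exact Or.inl ⟨heB, hBS heB, hu⟩

lemma JK_base_F (hU : U ⊆ S) (hME : M.E = S)
    (hF : IsFreeProduct (M ↾ U) (M.con U) F) (hJ : M.IsBasis J U)
    (hK : (M.con U).IsBase K) : F.IsBase (J ∪ K) := by
  have hKg : K ⊆ M.E \ U := hK.subset_ground
  have hKS : K ⊆ S \ U := hME ▸ hKg
  have hJU := hJ.subset
  have hdisj : Disjoint J K := disjoint_left.2 fun e hj hk => (hKg hk).2 (hJU hj)
  have hcapU : (J ∪ K) ∩ U = J := by
    have hKU : K ∩ U = ∅ := eq_empty_iff_forall_notMem.2 fun e he => (hKg he.1).2 he.2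
    rw [union_inter_distrib_right, inter_eq_self_of_subset_left hJU, hKU, union_empty]
  have hcapC : (J ∪ K) ∩ (S \ U) = K := by
    have hJC : J ∩ (S \ U) = ∅ :=
      eq_empty_iff_forall_notMem.2 fun e he => he.2.2 (hJU he.1)
    rw [union_inter_distrib_right, hJC, empty_union, inter_eq_self_of_subset_left hKS]
  rw [isFP_base_iff hU hME hF]
  refine ⟨union_subset (hJU.trans hU) (hKS.trans diff_subset), ?_, ?_, ?_⟩
  · rw [encard_union_eq hdisj, erank_eq_encard hJ.isBase_restrict, erank_eq_encard hK]
  · rw [hcapU]; exact hJ.indep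
  · rw [hcapC]; exact hK.spanning

end Aux

/-- for matroids on a fixed finite set `S` and `U ⊆ S`, the map
`φ_U : M ↦ M|U □ M/U` is a closure operator for the rank-preserving weak order:
it is extensive (`M ≤ φ_U(M)`), order-preserving, and idempotent; moreover `M` is
`φ_U`-closed iff `U` is a free separator of `M`, i.e. iff `M = M|U □ M/U`.
(The free product `φ_U(M)` is represented by a matroid `F` with
`IsFreeProduct (M ↾ U) (M.con U) F`.) -/
theorem phiU_closure_operator (S : Set α) (hS : S.Finite) (U : Set α) (hU : U ⊆ S) :
    -- extensive
    (∀ M F : Matroid α, M.E = S → IsFreeProduct (M ↾ U) (M.con U) F → weakLE M F) ∧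
    -- order-preserving
    (∀ M N FM FN : Matroid α, M.E = S → N.E = S →
      IsFreeProduct (M ↾ U) (M.con U) FM → IsFreeProduct (N ↾ U) (N.con U) FN →
      weakLE M N → weakLE FM FN) ∧
    -- idempotent
    (∀ M F : Matroid α, M.E = S → IsFreeProduct (M ↾ U) (M.con U) F →
      IsFreeProduct (F ↾ U) (F.con U) F) ∧
    -- closed iff free separator
    (∀ M F : Matroid α, M.E = S → IsFreeProduct (M ↾ U) (M.con U) F →
      (M = F ↔ IsFreeProduct (M ↾ U) (M.con U) M)) := by
  refine ⟨?_, ?_, ?_, ?_⟩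
  · -- extensive
    intro M F hME hF
    exact ⟨hME.trans (isFP_ground hU hME hF).symm, fun B hB => base_to_F hU hME hF hB⟩
  · -- order-preserving
    intro M N FM FN hME hNE hFM hFN hMN
    have hUE : U ⊆ M.E := hME ▸ hU
    have hUN : U ⊆ N.E := hNE ▸ hU
    refine ⟨(isFP_ground hU hME hFM).trans (isFP_ground hU hNE hFN).symm, fun B hB => ?_⟩
    rw [isFP_base_iff hU hME hFM] at hB
    obtain ⟨hBS, hcard, hind, hsp⟩ := hB
    rw [isFP_base_iff hU hNE hFN]
    refine ⟨hBS, ?_, ?_, ?_⟩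
    · obtain ⟨B0, hB0⟩ := M.exists_isBase
      have herk : M.erank = N.erank :=
        (erank_eq_encard hB0).trans (erank_eq_encard (hMN.2 _ hB0)).symm
      rw [rank_sum hUN, ← herk, ← rank_sum hUE]
      exact hcard
    · obtain ⟨B1, hB1, hsub⟩ := hind.exists_isBase_superset
      exact indep_iff.2 ⟨B1, hMN.2 _ hB1, hsub⟩
    · rw [con_spanning_iff hUE
        (show B ∩ (S \ U) ⊆ M.E \ U by rw [hME]; exact inter_subset_right)] at hsp
      rw [con_spanning_iff hUN
        (show B ∩ (S \ U) ⊆ N.E \ U by rw [hNE]; exact inter_subset_right)]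
      obtain ⟨B2, hB2, hB2sub⟩ := hsp.exists_isBase_subset
      exact spanning_iff_exists_isBase_subset'.2
        ⟨⟨B2, hMN.2 _ hB2, hB2sub⟩, hsp.subset_ground.trans (hME.trans hNE.symm).le⟩
  · -- idempotent
    intro M F hME hF
    have hUE : U ⊆ M.E := hME ▸ hU
    have hFE : F.E = S := isFP_ground hU hME hF
    have hUF : U ⊆ F.E := hFE ▸ hU
    have hMfin : M.E.Finite := hME ▸ hS
    have hres : F ↾ U = M ↾ U := by
      refine ext_indep rfl fun ⦃I⦄ hIU => ?_
      rw [restrict_indep_iff, restrict_indep_iff]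
      constructor
      · rintro ⟨hFI, hIU'⟩
        refine ⟨?_, hIU'⟩
        obtain ⟨B, hB, hIB⟩ := hFI.exists_isBase_superset
        rw [isFP_base_iff hU hME hF] at hB
        exact hB.2.2.1.subset (subset_inter hIB hIU')
      · rintro ⟨hMI, hIU'⟩
        obtain ⟨J, hJ, hIJ⟩ := hMI.subset_isBasis_of_subset hIU' hUE
        obtain ⟨K, hK⟩ := (M.con U).exists_isBase
        exact ⟨indep_iff.2 ⟨J ∪ K, JK_base_F hU hME hF hJ hK,
          hIJ.trans subset_union_left⟩, hIU'⟩
    have hbasis : ∀ J, F.IsBasis J U ↔ M.IsBasis J U := fun J => by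
      rw [← isBase_restrict_iff (show U ⊆ F.E from hUF),
        ← isBase_restrict_iff (show U ⊆ M.E from hUE), hres]
    have hcon : F.con U = M.con U := by
      refine ext_isBase
        (by rw [con_ground, con_ground, hFE, hME]) fun ⦃K⦄ _ => ?_
      constructor
      · intro hKF
        obtain ⟨hKgF, J, hJF, hBF⟩ := exists_of_con_base hUF hKF
        have hJM : M.IsBasis J U := (hbasis J).1 hJF
        have hKS : K ⊆ S \ U := hFE ▸ hKgF
        have hJU := hJM.subset
        rw [isFP_base_iff hU hME hF] at hBF
        obtain ⟨hsub, hcard, -, hsp⟩ := hBF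
        have hcapC : (K ∪ J) ∩ (S \ U) = K := by
          have hJC : J ∩ (S \ U) = ∅ :=
            eq_empty_iff_forall_notMem.2 fun e he => he.2.2 (hJU he.1)
          rw [union_inter_distrib_right, hJC, union_empty,
            inter_eq_self_of_subset_left hKS]
        rw [hcapC] at hsp
        have hdisj : Disjoint K J := disjoint_left.2 fun e hk hj => (hKS hk).2 (hJU hj)
        rw [encard_union_eq hdisj, erank_eq_encard hJM.isBase_restrict] at hcard
        rw [add_comm J.encard ((M.con U).erank)] at hcard
        have hJne : J.encard ≠ ⊤ := (hS.subset (hJU.trans hU)).encard_lt_top.ne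
        have hKcard : K.encard = (M.con U).erank := WithTop.add_right_cancel hJne hcard
        exact spanning_base_of (hMfin.subset (show (M.con U).E ⊆ M.E from diff_subset))
          hsp hKcard
      · intro hKM
        obtain ⟨hKgM, J, hJM, -⟩ := exists_of_con_base hUE hKM
        have hKF : K ⊆ F.E \ U := by rw [hFE, ← hME]; exact hKgM
        have hFB : F.IsBase (K ∪ J) := by
          rw [union_comm]
          exact JK_base_F hU hME hF hJM hKM
        exact con_base_of hUF ((hbasis J).2 hJM) hKF hFB
    rw [hres, hcon]
    exact hF
  · -- closed iff free separator
    intro M F hME hF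
    constructor
    · intro h
      subst h
      exact hF
    · intro hM
      exact ext_isBase (hME.trans (isFP_ground hU hME hF).symm)
        (fun ⦃B⦄ _ => (hM.2 B).trans ((hF.2 B)).symm)
end
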